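/- Let V be a simple weight 𝔤𝔩_n(ℂ)-module with weight decomposition V = ⊕_{μ ∈ ℤ^n} V_{λ+μ} for some λ ∈ ℂ^n, and let P be a 𝒦_n-module. Then the linear map φ : P ⊗ V → P^{λ̃} ⊗ V given by p ⊗ v_μ ↦ (x^{−μ} p) ⊗ v_μ for v_μ ∈ V_{λ+μ} is an isomorphism of W_n-modules, where the source carries the action D(u,r)(z ⊗ y) = D(u,r)z ⊗ y + x^r z ⊗ (ruᵀ)y and the target carries the action (x^{r−e_j}∂_j)∘(p ⊗ w) = (x^{r−e_j}∂_j)p ⊗ w + Σ_i r_i (x^{r−e_i}p) ⊗ E_{ij}w. -/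

import Mathlib

/-- A module over the Weyl algebra `𝒦ₙ` of the Laurent polynomial algebra
`Aₙ = ℂ[x₁^{±1},...,xₙ^{±1}]`: the data of commuting multiplication operators `X r`
(by the monomials `x^r`, `r ∈ ℤⁿ`) and degree-derivation operators `pd i = xᵢ∂/∂xᵢ`,
subject to the defining relations of `𝒦ₙ`. -/
structure WeylModule (n : ℕ) (P : Type*) [AddCommGroup P] [Module ℂ P] where
  X : (Fin n → ℤ) → Module.End ℂ P
  pd : Fin n → Module.End ℂ P
  X_zero : X 0 = 1
  X_add : ∀ r s, X (r + s) = X r * X s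
  pd_comm : ∀ i j, pd i * pd j = pd j * pd i
  pd_X : ∀ i r, pd i * X r = X r * (pd i + (r i : ℂ) • 1)

/-- The pairing `⟨u, s⟩ = ∑ i, u i * s i`. -/
noncomputable def pairing {n : ℕ} (u : Fin n → ℂ) (s : Fin n → ℤ) : ℂ := ∑ i, u i * (s i : ℂ)

namespace WeylModule

variable {n : ℕ} {P : Type*} [AddCommGroup P] [Module ℂ P]

/-- The operator `D(u,r) = x^r ∑ᵢ uᵢ ∂ᵢ ∈ 𝒦ₙ` acting on `P`. -/
noncomputable def D (K : WeylModule n P) (u : Fin n → ℂ) (r : Fin n → ℤ) : Module.End ℂ P :=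
  K.X r * ∑ i, u i • K.pd i

end WeylModule

open TensorProduct

/-- The generator `x^{r−e_j}∂_j` of `Wₙ` acting on `ℱ(P,V) = P ⊗ V` by
`D(u,r')(z ⊗ y) = D(u,r')z ⊗ y + x^{r'} z ⊗ (r'uᵀ)y` with `u = e_j`, `r' = r − e_j`. -/
noncomputable def actF {n : ℕ} {P V : Type*} [AddCommGroup P] [Module ℂ P]
    [AddCommGroup V] [Module ℂ V] (K : WeylModule n P)
    (ρ : Matrix (Fin n) (Fin n) ℂ →ₗ[ℂ] Module.End ℂ V)
    (r : Fin n → ℤ) (j : Fin n) : Module.End ℂ (P ⊗[ℂ] V) :=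
  TensorProduct.map (K.D (Pi.single j 1) (r - Pi.single j 1)) LinearMap.id +
    TensorProduct.map (K.X (r - Pi.single j 1))
      (ρ (Matrix.vecMulVec (fun i => (((r - Pi.single j 1 : Fin n → ℤ)) i : ℂ)) (Pi.single j 1)))

/-- The generator `x^{r−e_j}∂_j` of `Wₙ` acting on `F(P^{λ̃},V)` by
`(x^{r−e_j}∂_j)∘(p ⊗ w) = (x^{r−e_j}(∂_j − λ_j))p ⊗ w + ∑ᵢ rᵢ (x^{r−e_i}p) ⊗ E_{ij}w`,
where the `𝒦ₙ`-action on `P^{λ̃}` is twisted by `λ̃ : x^α ↦ x^α, ∂_j ↦ ∂_j − λ_j`. -/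
noncomputable def actFtw {n : ℕ} {P V : Type*} [AddCommGroup P] [Module ℂ P]
    [AddCommGroup V] [Module ℂ V] (K : WeylModule n P)
    (ρ : Matrix (Fin n) (Fin n) ℂ →ₗ[ℂ] Module.End ℂ V) (lam : Fin n → ℂ)
    (r : Fin n → ℤ) (j : Fin n) : Module.End ℂ (P ⊗[ℂ] V) :=
  TensorProduct.map (K.X (r - Pi.single j 1) * (K.pd j - lam j • 1)) LinearMap.id +
    ∑ i : Fin n, (r i : ℂ) •
      TensorProduct.map (K.X (r - Pi.single i 1)) (ρ (Matrix.single i j (1 : ℂ)))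

section Aux

/-- Decomposition of `vecMulVec c (Pi.single j 1)` into standard basis matrices. -/
lemma vecMulVec_single_eq_sum {n : ℕ} (c : Fin n → ℂ) (j : Fin n) :
    Matrix.vecMulVec c (Pi.single j 1) = ∑ i, c i • Matrix.single i j (1 : ℂ) := by
  ext a b
  simp only [Matrix.vecMulVec_apply, Matrix.sum_apply, Matrix.smul_apply,
    Matrix.single, Matrix.of_apply, Pi.single_apply, smul_eq_mul, ite_and, mul_ite,
    mul_one, mul_zero]
  rw [Finset.sum_ite_eq' Finset.univ a (fun i => if j = b then c i else 0)]
  by_cases hb : b = j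
  · subst hb; simp
  · simp [hb, Ne.symm hb]

end Aux

open DirectSum in
set_option maxHeartbeats 2000000 in
/-- Let `V` be a simple weight `𝔤𝔩ₙ(ℂ)`-module with weights in `λ + ℤⁿ`, and `P` a
`𝒦ₙ`-module.  Then `p ⊗ v_μ ↦ (x^{−μ}p) ⊗ v_μ` (for `v_μ` of weight `λ + μ`) extends to
a linear isomorphism `φ : ℱ(P,V) → F(P^{λ̃},V)` intertwining the two `Wₙ`-actions. -/
theorem F_iso_twisted (n : ℕ) (P V : Type*) [AddCommGroup P] [Module ℂ P]
    [AddCommGroup V] [Module ℂ V] (K : WeylModule n P)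
    (ρ : Matrix (Fin n) (Fin n) ℂ →ₗ[ℂ] Module.End ℂ V)
    (hρ : ∀ A B : Matrix (Fin n) (Fin n) ℂ, ρ ⁅A, B⁆ = ⁅ρ A, ρ B⁆)
    (hsimple : ∀ W : Submodule ℂ V,
      (∀ A : Matrix (Fin n) (Fin n) ℂ, W.map (ρ A) ≤ W) → W = ⊥ ∨ W = ⊤)
    (lam : Fin n → ℂ)
    (hweight : Submodule.span ℂ
      {v : V | ∃ μ : Fin n → ℤ, ∀ i : Fin n,
        ρ (Matrix.single i i (1 : ℂ)) v = (lam i + (μ i : ℂ)) • v} = ⊤) :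
    ∃ φ : (P ⊗[ℂ] V) ≃ₗ[ℂ] (P ⊗[ℂ] V),
      (∀ (μ : Fin n → ℤ) (p : P) (v : V),
        (∀ i : Fin n, ρ (Matrix.single i i (1 : ℂ)) v = (lam i + (μ i : ℂ)) • v) →
        φ (p ⊗ₜ[ℂ] v) = K.X (-μ) p ⊗ₜ[ℂ] v) ∧
      (∀ (r : Fin n → ℤ) (j : Fin n) (z : P ⊗[ℂ] V),
        φ (actF K ρ r j z) = actFtw K ρ lam r j (φ z)) := by
  classical
  set E : Fin n → Fin n → Matrix (Fin n) (Fin n) ℂ :=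
    fun i j => Matrix.single i j (1 : ℂ) with hE
  -- weight spaces
  set Wsp : (Fin n → ℤ) → Submodule ℂ V :=
    fun μ => ⨅ i, Module.End.eigenspace (ρ (E i i)) (lam i + μ i) with hWsp
  have mem_Wsp : ∀ (μ : Fin n → ℤ) (v : V),
      v ∈ Wsp μ ↔ ∀ i, ρ (E i i) v = (lam i + (μ i : ℂ)) • v := by
    intro μ v
    simp [hWsp, Submodule.mem_iInf, Module.End.mem_eigenspace_iff]
  -- commutation of the ρ (E i i)
  have hbrak : ∀ A B : Matrix (Fin n) (Fin n) ℂ,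
      ρ (A * B - B * A) = ρ A * ρ B - ρ B * ρ A := by
    intro A B
    have := hρ A B
    rwa [Ring.lie_def, Ring.lie_def] at this
  have hcomm : ∀ i k, Commute (ρ (E i i)) (ρ (E k k)) := by
    intro i k
    have h0 : E i i * E k k - E k k * E i i = 0 := by
      by_cases hik : i = k
      · subst hik; simp
      · show Matrix.single i i 1 * Matrix.single k k 1 -
          Matrix.single k k 1 * Matrix.single i i 1 = 0
        rw [Matrix.single_mul_single_of_ne (h := hik),
          Matrix.single_mul_single_of_ne (h := Ne.symm hik), sub_zero]
    have := hbrak (E i i) (E k k)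
    rw [h0, map_zero] at this
    exact (sub_eq_zero.mp this.symm)
  -- weight-shift of ρ (E i j)
  have hshift : ∀ (μ : Fin n → ℤ) (i j : Fin n) (v : V), v ∈ Wsp μ →
      ρ (E i j) v ∈ Wsp (μ + Pi.single i 1 - Pi.single j 1) := by
    intro μ i j v hv
    rw [mem_Wsp] at hv ⊢
    intro k
    have h1 : E k k * E i j = if k = i then E i j else 0 := by
      by_cases hk : k = i
      · subst hk; simp [hE]
      · show Matrix.single k k 1 * Matrix.single i j 1 = _
        rw [Matrix.single_mul_single_of_ne (h := hk), if_neg hk]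
    have h2 : E i j * E k k = if k = j then E i j else 0 := by
      by_cases hk : k = j
      · subst hk; simp [hE]
      · show Matrix.single i j 1 * Matrix.single k k 1 = _
        rw [Matrix.single_mul_single_of_ne (h := fun h => hk h.symm), if_neg hk]
    have hval : ((μ + Pi.single i 1 - Pi.single j 1 : Fin n → ℤ) k : ℂ)
        = (μ k : ℂ) + (if k = i then 1 else 0) - (if k = j then 1 else 0) := by
      simp only [Pi.sub_apply, Pi.add_apply, Pi.single_apply]
      push_cast
      by_cases hk : k = i <;> by_cases hk' : k = j <;> simp [hk, hk']
    have hEkk : ρ (E k k) (ρ (E i j) v)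
        = ρ (E i j) (ρ (E k k) v) + (ρ (E k k * E i j) v - ρ (E i j * E k k) v) := by
      have h := DFunLike.congr_fun (hbrak (E k k) (E i j)) v
      simp only [map_sub, LinearMap.sub_apply, Module.End.mul_apply] at h
      rw [h]
      abel
    rw [hEkk, hv k, map_smul, h1, h2, hval]
    simp only [apply_ite ρ, map_zero, apply_ite (fun (f : Module.End ℂ V) => f v),
      LinearMap.zero_apply]
    split_ifs <;> simp only [add_smul, sub_smul, one_smul, zero_smul] <;> abel
  -- independence and internality
  have hind : iSupIndep Wsp := by
    have h1 : iSupIndep (fun χ : Fin n → ℂ =>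
        ⨅ i, Module.End.maxGenEigenspace (ρ (E i i)) (χ i)) :=
      Module.End.independent_iInf_maxGenEigenspace_of_forall_mapsTo (fun i => ρ (E i i))
        (fun i j φ => Module.End.mapsTo_maxGenEigenspace_of_comm (hcomm j i) φ)
    have hinj : Function.Injective
        (fun μ : Fin n → ℤ => (fun i => lam i + μ i : Fin n → ℂ)) := by
      intro a b hab
      funext i
      have := congrFun hab i
      simpa using this
    exact (h1.comp hinj).mono fun μ => iInf_mono fun i =>
      (Module.End.genEigenspace _ _).monotone le_top
  have hsup : ⨆ μ, Wsp μ = ⊤ := by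
    rw [← top_le_iff, ← hweight, Submodule.span_le]
    rintro v ⟨μ, hv⟩
    exact Submodule.mem_iSup_of_mem μ ((mem_Wsp μ v).mpr hv)
  have hInt : DirectSum.IsInternal Wsp :=
    DirectSum.isInternal_submodule_of_iSupIndep_of_iSup_eq_top hind hsup
  -- invertibility of X
  have hX0 : ∀ a b : Fin n → ℤ, a + b = 0 → K.X a ∘ₗ K.X b = LinearMap.id := by
    intro a b hab
    rw [← Module.End.mul_eq_comp, ← K.X_add, hab, K.X_zero]
    rfl
  let Xe : (Fin n → ℤ) → (P ≃ₗ[ℂ] P) := fun μ =>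
    LinearEquiv.ofLinear (K.X (-μ)) (K.X μ) (hX0 _ _ (by abel)) (hX0 _ _ (by abel))
  -- the isomorphism
  let e : V ≃ₗ[ℂ] ⨁ μ, Wsp μ := (LinearEquiv.ofBijective (DirectSum.coeLinearMap Wsp) hInt).symm
  let ψ : ∀ μ, (P ⊗[ℂ] Wsp μ) ≃ₗ[ℂ] (P ⊗[ℂ] Wsp μ) :=
    fun μ => TensorProduct.congr (Xe μ) (LinearEquiv.refl ℂ (Wsp μ))
  let φ : (P ⊗[ℂ] V) ≃ₗ[ℂ] (P ⊗[ℂ] V) :=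
    (TensorProduct.congr (LinearEquiv.refl ℂ P) e).trans <|
    (TensorProduct.directSumRight ℂ ℂ P (fun μ => Wsp μ)).trans <|
    (DFinsupp.mapRange.linearEquiv ψ).trans <|
    (TensorProduct.directSumRight ℂ ℂ P (fun μ => Wsp μ)).symm.trans
    (TensorProduct.congr (LinearEquiv.refl ℂ P) e.symm)
  have hφ : ∀ (μ : Fin n → ℤ) (p : P) (v : V), v ∈ Wsp μ →
      φ (p ⊗ₜ[ℂ] v) = K.X (-μ) p ⊗ₜ[ℂ] v := by
    intro μ p v hv
    have he : e v = DirectSum.lof ℂ _ (fun μ => Wsp μ) μ ⟨v, hv⟩ := by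
      rw [LinearEquiv.symm_apply_eq]
      exact (by rw [DirectSum.lof_eq_of, DirectSum.coeLinearMap_of] :
        DirectSum.coeLinearMap Wsp (DirectSum.lof ℂ _ (fun μ => Wsp μ) μ ⟨v, hv⟩) = v).symm
    show (TensorProduct.congr (LinearEquiv.refl ℂ P) e.symm)
      ((TensorProduct.directSumRight ℂ ℂ P (fun μ => Wsp μ)).symm
        ((DFinsupp.mapRange.linearEquiv ψ)
          ((TensorProduct.directSumRight ℂ ℂ P (fun μ => Wsp μ))
            ((TensorProduct.congr (LinearEquiv.refl ℂ P) e) (p ⊗ₜ v))))) = K.X (-μ) p ⊗ₜ v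
    rw [TensorProduct.congr_tmul, LinearEquiv.refl_apply, he,
      TensorProduct.directSumRight_tmul_lof]
    have hmr : (DFinsupp.mapRange.linearEquiv ψ)
        (DirectSum.lof ℂ _ (fun μ => P ⊗[ℂ] Wsp μ) μ (p ⊗ₜ ⟨v, hv⟩))
        = DirectSum.lof ℂ _ (fun μ => P ⊗[ℂ] Wsp μ) μ (ψ μ (p ⊗ₜ ⟨v, hv⟩)) := by
      simp only [DFinsupp.mapRange.linearEquiv_apply, DirectSum.lof_eq_of]
      exact DFinsupp.mapRange_single
    rw [hmr]
    show (TensorProduct.congr (LinearEquiv.refl ℂ P) e.symm)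
      ((TensorProduct.directSumRight ℂ ℂ P (fun μ => Wsp μ)).symm
        (DirectSum.lof ℂ _ _ μ ((K.X (-μ) p) ⊗ₜ (⟨v, hv⟩ : Wsp μ)))) = K.X (-μ) p ⊗ₜ v
    rw [TensorProduct.directSumRight_symm_lof_tmul, TensorProduct.congr_tmul]
    congr 1
    exact (LinearEquiv.symm_apply_eq e).mpr he.symm
  refine ⟨φ, fun μ p v hv => hφ μ p v ((mem_Wsp μ v).mpr hv), ?_⟩
  -- intertwining
  intro r j
  -- main computation on weight vectors
  have main : ∀ (p : P) (μ : Fin n → ℤ) (v : V), v ∈ Wsp μ →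
      φ (actF K ρ r j (p ⊗ₜ v)) = actFtw K ρ lam r j (φ (p ⊗ₜ v)) := by
    intro p μ v hv
    set r' : Fin n → ℤ := r - Pi.single j 1 with hr'
    -- LHS expansion
    have hρM : ρ (Matrix.vecMulVec (fun i => ((r' i : ℤ) : ℂ)) (Pi.single j 1))
        = ∑ i, ((r' i : ℤ) : ℂ) • ρ (E i j) := by
      rw [vecMulVec_single_eq_sum, map_sum]
      exact Finset.sum_congr rfl fun i _ => by rw [map_smul, hE]
    have hD : K.D (Pi.single j 1) r' = K.X r' * K.pd j := by
      unfold WeylModule.D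
      congr 1
      rw [Finset.sum_eq_single j]
      · simp
      · intro i _ hij; simp [Pi.single_apply, hij]
      · simp
    have hXX : ∀ (a b : Fin n → ℤ) (q : P), K.X a (K.X b q) = K.X (a + b) q := by
      intro a b q
      rw [K.X_add]; rfl
    have hLHS : φ (actF K ρ r j (p ⊗ₜ v))
        = (K.X (r' - μ) * K.pd j) p ⊗ₜ[ℂ] v
          + ∑ i, ((r' i : ℤ) : ℂ) •
            (K.X (r - Pi.single i 1 - μ) p ⊗ₜ[ℂ] ρ (E i j) v) := by
      simp only [actF]
      simp only [LinearMap.add_apply, TensorProduct.map_tmul, LinearMap.id_coe, id_eq]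
      rw [hD, hρM]
      simp only [LinearMap.sum_apply, LinearMap.smul_apply]
      rw [TensorProduct.tmul_sum, map_add, map_sum]
      congr 1
      · rw [hφ μ _ v hv]
        congr 1
        show K.X (-μ) ((K.X r' * K.pd j) p) = (K.X (r' - μ) * K.pd j) p
        show K.X (-μ) (K.X r' (K.pd j p)) = K.X (r' - μ) (K.pd j p)
        rw [hXX]
        congr 1
        abel
      · refine Finset.sum_congr rfl fun i _ => ?_
        rw [TensorProduct.tmul_smul, map_smul,
          hφ (μ + Pi.single i 1 - Pi.single j 1) _ _ (hshift μ i j v hv), hXX]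
        congr 2
        abel
    -- RHS expansion
    have hEjj : ρ (E j j) v = (lam j + (μ j : ℂ)) • v := (mem_Wsp μ v).mp hv j
    have hRHS : actFtw K ρ lam r j (φ (p ⊗ₜ v))
        = (K.X (r' - μ) * K.pd j) p ⊗ₜ[ℂ] v
          - ((μ j : ℂ) + lam j) • (K.X (r' - μ) p ⊗ₜ[ℂ] v)
          + ∑ i, ((r i : ℤ) : ℂ) •
            (K.X (r - Pi.single i 1 - μ) p ⊗ₜ[ℂ] ρ (E i j) v) := by
      rw [hφ μ p v hv]
      simp only [actFtw]
      simp only [LinearMap.add_apply, LinearMap.sum_apply, LinearMap.smul_apply,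
        TensorProduct.map_tmul, LinearMap.id_coe, id_eq]
      congr 1
      · -- first term
        have h1 : K.pd j * K.X (-μ) = K.X (-μ) * K.pd j - (μ j : ℂ) • K.X (-μ) := by
          rw [K.pd_X j (-μ)]
          have hc : (((-μ : Fin n → ℤ) j : ℤ) : ℂ) = -((μ j : ℤ) : ℂ) := by
            simp
          rw [mul_add, mul_smul_comm, mul_one, hc, neg_smul, ← sub_eq_add_neg]
        have hop : K.X r' * (K.pd j - lam j • 1) * K.X (-μ)
            = K.X (r' - μ) * K.pd j - ((μ j : ℂ) + lam j) • K.X (r' - μ) := by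
          calc K.X r' * (K.pd j - lam j • 1) * K.X (-μ)
              = K.X r' * ((K.pd j - lam j • 1) * K.X (-μ)) := by rw [mul_assoc]
            _ = K.X r' * (K.pd j * K.X (-μ) - lam j • K.X (-μ)) := by
                rw [sub_mul, smul_mul_assoc, one_mul]
            _ = K.X r' * (K.X (-μ) * K.pd j - (μ j : ℂ) • K.X (-μ) - lam j • K.X (-μ)) := by
                rw [h1]
            _ = K.X r' * K.X (-μ) * K.pd j - (μ j : ℂ) • (K.X r' * K.X (-μ))
                - lam j • (K.X r' * K.X (-μ)) := by
                simp only [mul_sub, mul_smul_comm, mul_assoc]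
            _ = K.X (r' - μ) * K.pd j - ((μ j : ℂ) + lam j) • K.X (r' - μ) := by
                rw [← K.X_add]
                have hab : r' + -μ = r' - μ := by abel
                rw [hab, add_smul]
                abel
        show (K.X r' * (K.pd j - lam j • 1)) (K.X (-μ) p) ⊗ₜ[ℂ] v = _
        have : (K.X r' * (K.pd j - lam j • 1)) (K.X (-μ) p)
            = (K.X r' * (K.pd j - lam j • 1) * K.X (-μ)) p := rfl
        rw [this, hop]
        simp only [LinearMap.sub_apply, LinearMap.smul_apply, Module.End.mul_apply]
        rw [TensorProduct.sub_tmul, TensorProduct.smul_tmul']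
      · refine Finset.sum_congr rfl fun i _ => ?_
        congr 2
        rw [hXX]
        try congr 1
        try abel
    rw [hLHS, hRHS]
    -- split the sum on the left
    have hsplit : ∀ i, ((r' i : ℤ) : ℂ) = ((r i : ℤ) : ℂ) - (if i = j then 1 else 0 : ℂ) := by
      intro i
      simp only [hr', Pi.sub_apply, Pi.single_apply]
      push_cast
      by_cases hij : i = j <;> simp [hij]
    rw [Finset.sum_congr rfl (fun i _ => by rw [hsplit i, sub_smul])]
    rw [Finset.sum_sub_distrib]
    have hjterm : ∑ i, (if i = j then 1 else 0 : ℂ) •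
        (K.X (r - Pi.single i 1 - μ) p ⊗ₜ[ℂ] ρ (E i j) v)
        = (lam j + (μ j : ℂ)) • (K.X (r' - μ) p ⊗ₜ[ℂ] v) := by
      rw [Finset.sum_eq_single j]
      · rw [if_pos rfl, one_smul, hEjj, TensorProduct.tmul_smul]
        try congr 2
        try abel
      · intro i _ hij; rw [if_neg hij, zero_smul]
      · simp
    rw [hjterm]
    have : ((μ j : ℂ) + lam j) = (lam j + (μ j : ℂ)) := by ring
    rw [this]
    abel
  -- extend to all z by linearity
  intro z
  have hmaps : (φ.toLinearMap ∘ₗ actF K ρ r j) = (actFtw K ρ lam r j ∘ₗ φ.toLinearMap) := by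
    apply TensorProduct.ext'
    intro p v
    have key : (φ.toLinearMap ∘ₗ actF K ρ r j) ∘ₗ TensorProduct.mk ℂ P V p =
        (actFtw K ρ lam r j ∘ₗ φ.toLinearMap) ∘ₗ TensorProduct.mk ℂ P V p := by
      apply LinearMap.ext_on hweight
      rintro w ⟨μ, hw⟩
      simpa using main p μ w ((mem_Wsp μ w).mpr hw)
    exact DFunLike.congr_fun key v
  exact DFunLike.congr_fun hmaps z
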